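/- arXiv:1509.00528 — 4 statements merged into one kernel-verified Lean document; each statement's English description precedes it below -/
import Mathlib

section
/- If G₁ and G₂ are finite groups each isomorphic to a subgroup of a finite direct product of copies of S₃, then the direct product G₁ × G₂ is also isomorphic to a subgroup of a finite direct product of copies of S₃, and every subgroup and every quotient of G₁ is as well. -/
/-- A finite group is of *generalized `S₃`-type* if it embeds into a finite direct
product of copies of the symmetric group on `3` letters. -/
def IsGeneralizedS3Type (G : Type*) [Group G] : Prop :=
  ∃ (n : ℕ) (f : G →* (Fin n → Equiv.Perm (Fin 3))), Function.Injective f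


def aff (u : (ZMod 3)ˣ) (a : ZMod 3) : Equiv.Perm (ZMod 3) where
  toFun x := u * x + a
  invFun y := (u⁻¹ : (ZMod 3)ˣ) * (y - a)
  left_inv x := by show (u⁻¹ : (ZMod 3)ˣ) * ((u : ZMod 3) * x + a - a) = x
                   rw [add_sub_cancel_right, Units.inv_mul_cancel_left]
  right_inv y := by show (u : ZMod 3) * ((u⁻¹ : (ZMod 3)ˣ) * (y - a)) + a = y
                    rw [Units.mul_inv_cancel_left, sub_add_cancel]

lemma aff_apply (u : (ZMod 3)ˣ) (a : ZMod 3) (x : ZMod 3) : aff u a x = u * x + a := rfl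

lemma aff_mul (u₁ u₂ : (ZMod 3)ˣ) (a₁ a₂ : ZMod 3) :
    aff u₁ a₁ * aff u₂ a₂ = aff (u₁ * u₂) (u₁ * a₂ + a₁) := by
  ext x
  rw [Equiv.Perm.mul_apply, aff_apply, aff_apply, aff_apply, Units.val_mul]
  ring

lemma aff_eq_one (u : (ZMod 3)ˣ) (a : ZMod 3) (h : aff u a = 1) : u = 1 ∧ a = 0 := by
  have h0 : aff u a 0 = 0 := by rw [h]; rfl
  have h1 : aff u a 1 = 1 := by rw [h]; rfl
  rw [aff_apply, mul_zero, zero_add] at h0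
  rw [aff_apply, mul_one, h0, add_zero] at h1
  exact ⟨Units.ext h1, h0⟩

section LinHelpers
variable {V : Type*} [AddCommGroup V] [Module (ZMod 3) V]


lemma exists_eigen {H : Type*} (ρ : H → V →ₗ[ZMod 3] V)
    (hcomm : ∀ h₁ h₂ : H, (ρ h₁).comp (ρ h₂) = (ρ h₂).comp (ρ h₁))
    (hinv : ∀ h : H, (ρ h).comp (ρ h) = LinearMap.id)
    (L : List H) (ℓ : V →ₗ[ZMod 3] ZMod 3) (v : V) (hv : ℓ v ≠ 0) :
    ∃ ℓ' : V →ₗ[ZMod 3] ZMod 3, ℓ' v ≠ 0 ∧ ∀ h ∈ L, ∃ c : ZMod 3, ℓ'.comp (ρ h) = c • ℓ' := by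
  induction L generalizing ℓ with
  | nil => exact ⟨ℓ, hv, by simp⟩
  | cons h₀ L ih =>
    obtain ⟨ℓ', hv', hL⟩ := ih ℓ hv
    have key : ∀ ε : ZMod 3, ε = 1 ∨ ε = -1 →
        ∀ h ∈ L, ∃ c : ZMod 3, (ℓ' + ε • ℓ'.comp (ρ h₀)).comp (ρ h) = c • (ℓ' + ε • ℓ'.comp (ρ h₀)) := by
      intro ε _ h hh
      obtain ⟨c, hc⟩ := hL h hh
      refine ⟨c, ?_⟩
      rw [LinearMap.add_comp, LinearMap.smul_comp, LinearMap.comp_assoc, hcomm h₀ h,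
        ← LinearMap.comp_assoc, hc, LinearMap.smul_comp, smul_add]
      rw [smul_comm]
    have eig : ∀ ε : ZMod 3, ε = 1 ∨ ε = -1 →
        (ℓ' + ε • ℓ'.comp (ρ h₀)).comp (ρ h₀) = ε • (ℓ' + ε • ℓ'.comp (ρ h₀)) := by
      intro ε hε
      rw [LinearMap.add_comp, LinearMap.smul_comp, LinearMap.comp_assoc, hinv h₀,
        LinearMap.comp_id, smul_add, smul_smul]
      have : ε * ε = 1 := by rcases hε with h | h <;> rw [h] <;> ring
      rw [this, one_smul, add_comm]
  -- choose the sign making the value at v nonzero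
    by_cases hplus : (ℓ' + (1 : ZMod 3) • ℓ'.comp (ρ h₀)) v ≠ 0
    · refine ⟨_, hplus, ?_⟩
      intro h hh
      rcases List.mem_cons.mp hh with rfl | hh
      · exact ⟨1, eig 1 (Or.inl rfl)⟩
      · exact key 1 (Or.inl rfl) h hh
    · have hminus : (ℓ' + (-1 : ZMod 3) • ℓ'.comp (ρ h₀)) v ≠ 0 := by
        push_neg at hplus
        intro hm
        apply hv'
        have h2 : (2 : ZMod 3) * ℓ' v = 0 := by
          simp only [LinearMap.add_apply, LinearMap.smul_apply, one_smul, neg_smul, LinearMap.neg_apply,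
            smul_eq_mul, neg_mul, one_mul] at hplus hm
          linear_combination hplus + hm
        rcases mul_eq_zero.mp h2 with h | h
        · exact absurd h (by decide)
        · exact h
      refine ⟨_, hminus, ?_⟩
      intro h hh
      rcases List.mem_cons.mp hh with rfl | hh
      · exact ⟨-1, eig (-1) (Or.inr rfl)⟩
      · exact key (-1) (Or.inr rfl) h hh



-- packaged: common eigenvector functional with character
lemma exists_char {H : Type*} [Group H] [Finite H] (ρ : H → V →ₗ[ZMod 3] V)
    (hmul : ∀ h₁ h₂ : H, ρ (h₁ * h₂) = (ρ h₁).comp (ρ h₂))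
    (hcomm : ∀ h₁ h₂ : H, (ρ h₁).comp (ρ h₂) = (ρ h₂).comp (ρ h₁))
    (hinv : ∀ h : H, (ρ h).comp (ρ h) = LinearMap.id)
    (hL : ∀ (ℓ : V →ₗ[ZMod 3] ZMod 3) (v : V), ℓ v ≠ 0 →
      ∃ ℓ' : V →ₗ[ZMod 3] ZMod 3, ℓ' v ≠ 0 ∧ ∀ h : H, ∃ c : ZMod 3, ℓ'.comp (ρ h) = c • ℓ')
    (ℓ : V →ₗ[ZMod 3] ZMod 3) (v : V) (hv : ℓ v ≠ 0) :
    ∃ (ℓ' : V →ₗ[ZMod 3] ZMod 3) (χ : H →* (ZMod 3)ˣ), ℓ' v ≠ 0 ∧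
      ∀ (h : H) (w : V), ℓ' (ρ h w) = (χ h : ZMod 3) * ℓ' w := by
  classical
  obtain ⟨ℓ', hv', hc⟩ := hL ℓ v hv
  choose c hc using hc
  have huniq : ∀ (a b : ZMod 3), a • ℓ' = b • ℓ' → a = b := by
    intro a b hab
    have := congrArg (fun m : V →ₗ[ZMod 3] ZMod 3 => m v) hab
    simp only [LinearMap.smul_apply, smul_eq_mul] at this
    exact mul_right_cancel₀ hv' this
  have hc0 : ∀ h : H, c h ≠ 0 := by
    intro h h0
    apply hv'
    have h1 : ℓ'.comp (ρ h) = 0 := by rw [hc h, h0, zero_smul]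
    have h2 : (ℓ'.comp (ρ h)).comp (ρ h) = ℓ' := by
      rw [LinearMap.comp_assoc, hinv h, LinearMap.comp_id]
    rw [h1] at h2
    rw [← h2]
    rfl
  have hcmul : ∀ h₁ h₂ : H, c (h₁ * h₂) = c h₁ * c h₂ := by
    intro h₁ h₂
    apply huniq
    rw [← hc (h₁ * h₂), hmul, ← LinearMap.comp_assoc, hc h₁, LinearMap.smul_comp, hc h₂,
      smul_smul]
  refine ⟨ℓ', MonoidHom.mk' (fun h => Units.mk0 (c h) (hc0 h)) (fun h₁ h₂ => Units.ext (hcmul h₁ h₂)), hv', ?_⟩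
  intro h w
  have := congrArg (fun m : V →ₗ[ZMod 3] ZMod 3 => m w) (hc h)
  simpa using this

private lemma sgn_hom_aux : ∀ (x y : ZMod 2),
    (if x + y = 0 then (1 : (ZMod 3)ˣ) else -1) =
      (if x = 0 then (1 : (ZMod 3)ˣ) else -1) * (if y = 0 then (1 : (ZMod 3)ˣ) else -1) := by
  decide

private lemma neg_one_ne_one : (-1 : (ZMod 3)ˣ) ≠ 1 := by decide

-- characters of an elementary abelian 2-group separate points
lemma exists_char2 {H : Type*} [CommGroup H] (hsq : ∀ h : H, h ^ 2 = 1) {h : H} (hh : h ≠ 1) :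
    ∃ χ : H →* (ZMod 3)ˣ, χ h ≠ 1 := by
  classical
  haveI : Fact (Nat.Prime 2) := ⟨by norm_num⟩
  letI : Module (ZMod 2) (Additive H) := AddCommGroup.zmodModule (by
    intro x
    rw [← Additive.toMul.injective.eq_iff, toMul_nsmul, hsq]
    rfl)
  have hv : (Additive.ofMul h : Additive H) ≠ 0 := by
    intro h0
    exact hh (by simpa using congrArg Additive.toMul h0)
  have : ¬ ∀ φ : Module.Dual (ZMod 2) (Additive H), φ (Additive.ofMul h) = 0 := by
    rw [Module.forall_dual_apply_eq_zero_iff]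
    exact hv
  push_neg at this
  obtain ⟨φ, hφ⟩ := this
  refine ⟨MonoidHom.mk' (fun x => if φ (Additive.ofMul x) = 0 then 1 else (-1 : (ZMod 3)ˣ)) ?_, ?_⟩
  · intro a b
    have hab : φ (Additive.ofMul (a * b)) = φ (Additive.ofMul a) + φ (Additive.ofMul b) := by
      rw [ofMul_mul, map_add]
    show (if φ (Additive.ofMul (a * b)) = 0 then 1 else (-1 : (ZMod 3)ˣ)) = _
    rw [hab]
    exact sgn_hom_aux _ _
  · show (if φ (Additive.ofMul h) = 0 then 1 else (-1 : (ZMod 3)ˣ)) ≠ 1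
    rw [if_neg hφ]
    exact neg_one_ne_one

end LinHelpers

section Setup

theorem lemmaA {G : Type*} [Group G] [Finite G] (P : Subgroup G) [hPn : P.Normal]
    (hP3 : ∀ x ∈ P, x ^ 3 = 1)
    (hPc : ∀ x ∈ P, ∀ y ∈ P, x * y = y * x)
    (hsq : ∀ g : G, g ^ 2 ∈ P)
    (hcm : ∀ g h : G, g * h * g⁻¹ * h⁻¹ ∈ P) :
    IsGeneralizedS3Type G := by
  classical
  haveI : Fact (Nat.Prime 3) := ⟨by norm_num⟩
  haveI : Fact (Nat.Prime 2) := ⟨by norm_num⟩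
  -- coprimality and Schur–Zassenhaus
  have hp3 : IsPGroup 3 ↥P := fun g =>
    ⟨1, Subtype.ext (by rw [pow_one]; push_cast; exact hP3 _ g.2)⟩
  have hq2 : IsPGroup 2 (G ⧸ P) := by
    intro q
    obtain ⟨g, rfl⟩ := QuotientGroup.mk_surjective q
    exact ⟨1, by rw [pow_one, ← QuotientGroup.mk_pow, QuotientGroup.eq_one_iff]; exact hsq g⟩
  obtain ⟨a, ha⟩ := (IsPGroup.iff_card (p := 3)).mp hp3
  obtain ⟨b, hb⟩ := (IsPGroup.iff_card (p := 2)).mp hq2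
  have hco : Nat.Coprime (Nat.card ↥P) P.index := by
    rw [ha, Subgroup.index_eq_card, hb]
    exact Nat.Coprime.pow a b (by norm_num)
  obtain ⟨H, hc⟩ := Subgroup.exists_right_complement'_of_coprime hco
  have htriv : ∀ x : G, x ∈ P → x ∈ H → x = 1 :=
    fun x hp hh => Subgroup.disjoint_def.mp hc.disjoint hp hh
  have hHsq : ∀ h : ↥H, h ^ 2 = 1 := fun h =>
    Subtype.ext (by push_cast; exact htriv _ (hsq h) (pow_mem h.2 2))
  have hHcomm : ∀ h₁ h₂ : ↥H, h₁ * h₂ = h₂ * h₁ := by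
    intro h₁ h₂
    have hmem : (h₁ : G) * h₂ * (h₁:G)⁻¹ * (h₂:G)⁻¹ ∈ H :=
      mul_mem (mul_mem (mul_mem h₁.2 h₂.2) (inv_mem h₁.2)) (inv_mem h₂.2)
    have h1 := htriv _ (hcm h₁ h₂) hmem
    have e : (h₁:G) * h₂ * ((h₂:G) * h₁)⁻¹ = 1 := by
      rw [mul_inv_rev, ← mul_assoc]
      exact h1
    exact Subtype.ext (mul_inv_eq_one.mp e)
  letI cgH : CommGroup ↥H := { (inferInstance : Group ↥H) with mul_comm := hHcomm }
  letI cgP : CommGroup ↥P :=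
    { (inferInstance : Group ↥P) with
      mul_comm := fun x y => Subtype.ext (hPc _ x.2 _ y.2) }
  letI : Module (ZMod 3) (Additive ↥P) := AddCommGroup.zmodModule (by
    intro x
    rw [← Additive.toMul.injective.eq_iff, toMul_nsmul]
    exact Subtype.ext (by push_cast; exact hP3 _ x.toMul.2))
  -- conjugation action of H on P
  have conjmem : ∀ (h : ↥H) (p : ↥P), (h : G) * p * (h : G)⁻¹ ∈ P :=
    fun h p => hPn.conj_mem p p.2 h
  let ρ : ↥H → Additive ↥P →ₗ[ZMod 3] Additive ↥P := fun h =>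
    AddMonoidHom.toZModLinearMap 3
      { toFun := fun v => Additive.ofMul (⟨(h : G) * (Additive.toMul v : ↥P) * (h : G)⁻¹, conjmem h _⟩ : ↥P)
        map_zero' := by
          apply Additive.toMul.injective
          apply Subtype.ext
          show (h : G) * ((1 : ↥P) : G) * (h : G)⁻¹ = ((1 : ↥P) : G)
          push_cast
          group
        map_add' := by
          intro v w
          apply Additive.toMul.injective
          apply Subtype.ext
          show (h : G) * (((Additive.toMul v : ↥P) : G) * (Additive.toMul w : ↥P)) * (h : G)⁻¹ = _
          show _ = ((h : G) * (Additive.toMul v : ↥P) * (h : G)⁻¹) * ((h : G) * (Additive.toMul w : ↥P) * (h : G)⁻¹)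
          group }
  have ρ_apply : ∀ (h : ↥H) (v : Additive ↥P),
      ρ h v = Additive.ofMul (⟨(h : G) * (Additive.toMul v : ↥P) * (h : G)⁻¹, conjmem h _⟩ : ↥P) :=
    fun h v => rfl
  have hρmul : ∀ h₁ h₂ : ↥H, ρ (h₁ * h₂) = (ρ h₁).comp (ρ h₂) := by
    intro h₁ h₂
    apply LinearMap.ext
    intro v
    apply Additive.toMul.injective
    apply Subtype.ext
    show ((h₁ * h₂ : ↥H) : G) * (Additive.toMul v : ↥P) * ((h₁ * h₂ : ↥H) : G)⁻¹ =
      (h₁ : G) * ((h₂ : G) * (Additive.toMul v : ↥P) * (h₂ : G)⁻¹) * (h₁ : G)⁻¹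
    push_cast
    group
  have hρone : ρ 1 = LinearMap.id := by
    apply LinearMap.ext
    intro v
    apply Additive.toMul.injective
    apply Subtype.ext
    show ((1 : ↥H) : G) * (Additive.toMul v : ↥P) * ((1 : ↥H) : G)⁻¹ = (Additive.toMul v : ↥P)
    push_cast
    group
  have hρinv : ∀ h : ↥H, (ρ h).comp (ρ h) = LinearMap.id := by
    intro h
    rw [← hρmul]
    have : h * h = 1 := by rw [← pow_two]; exact hHsq h
    rw [this, hρone]
  have hρcomm : ∀ h₁ h₂ : ↥H, (ρ h₁).comp (ρ h₂) = (ρ h₂).comp (ρ h₁) := by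
    intro h₁ h₂
    rw [← hρmul, ← hρmul, mul_comm]
  -- decomposition g = pp g * hh g
  have hcset : Subgroup.IsComplement (P : Set G) (H : Set G) := hc
  let pp : G → ↥P := fun g => ⟨(hcset.equiv g).1.1, (hcset.equiv g).1.2⟩
  let hh : G → ↥H := fun g => ⟨(hcset.equiv g).2.1, (hcset.equiv g).2.2⟩
  have dec : ∀ g : G, (pp g : G) * (hh g : G) = g := fun g =>
    hcset.equiv_fst_mul_equiv_snd g
  have uniq : ∀ (g : G) (p : ↥P) (h : ↥H), (p : G) * (h : G) = g → pp g = p ∧ hh g = h := by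
    intro g p h hg
    have e1 : hcset.equiv g = (⟨(p : G), p.2⟩, ⟨(h : G), h.2⟩) := by
      rw [← hg]
      rw [show ((p : G) * (h : G)) = hcset.equiv.symm (⟨(p : G), p.2⟩, ⟨(h : G), h.2⟩) from rfl,
        Equiv.apply_symm_apply]
    constructor
    · exact Subtype.ext (congrArg (fun x => x.1.1) e1)
    · exact Subtype.ext (congrArg (fun x => x.2.1) e1)
  have hh_mul : ∀ g₁ g₂ : G, hh (g₁ * g₂) = hh g₁ * hh g₂ := by
    intro g₁ g₂
    refine (uniq (g₁ * g₂) (pp g₁ * ⟨(hh g₁ : G) * (pp g₂ : G) * (hh g₁ : G)⁻¹, conjmem _ _⟩)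
      (hh g₁ * hh g₂) ?_).2
    push_cast
    conv_rhs => rw [← dec g₁, ← dec g₂]
    push_cast
    group
  have pp_mul : ∀ g₁ g₂ : G,
      pp (g₁ * g₂) = pp g₁ * ⟨(hh g₁ : G) * (pp g₂ : G) * (hh g₁ : G)⁻¹, conjmem _ _⟩ := by
    intro g₁ g₂
    refine (uniq (g₁ * g₂) (pp g₁ * ⟨(hh g₁ : G) * (pp g₂ : G) * (hh g₁ : G)⁻¹, conjmem _ _⟩)
      (hh g₁ * hh g₂) ?_).1
    push_cast
    conv_rhs => rw [← dec g₁, ← dec g₂]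
    push_cast
    group
  -- common-eigenvector machinery
  have hL : ∀ (ℓ : Additive ↥P →ₗ[ZMod 3] ZMod 3) (v : Additive ↥P), ℓ v ≠ 0 →
      ∃ ℓ' : Additive ↥P →ₗ[ZMod 3] ZMod 3, ℓ' v ≠ 0 ∧ ∀ h : ↥H, ∃ c : ZMod 3, ℓ'.comp (ρ h) = c • ℓ' := by
    intro ℓ v hv
    haveI : Fintype ↥H := Fintype.ofFinite ↥H
    obtain ⟨ℓ', h1, h2⟩ := exists_eigen ρ hρcomm hρinv (Finset.univ.toList) ℓ v hv
    exact ⟨ℓ', h1, fun h => h2 h (Finset.mem_toList.mpr (Finset.mem_univ h))⟩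
  -- the index type
  let J := {p : (↥H →* (ZMod 3)ˣ) × (Additive ↥P →ₗ[ZMod 3] ZMod 3) //
      ∀ (h : ↥H) (w : Additive ↥P), p.2 (ρ h w) = (p.1 h : ZMod 3) * p.2 w}
  haveI : Finite (↥H →* (ZMod 3)ˣ) :=
    Finite.of_injective (fun f => (f : ↥H → (ZMod 3)ˣ)) (fun f g h => MonoidHom.ext (congrFun h))
  haveI : Finite (Additive ↥P →ₗ[ZMod 3] ZMod 3) :=
    Finite.of_injective (fun f => (f : Additive ↥P → ZMod 3)) (fun f g h => LinearMap.ext (congrFun h))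
  haveI : Finite J := Subtype.finite
  have Fmul : ∀ g₁ g₂ : G,
      (fun j : J => aff (j.1.1 (hh (g₁ * g₂))) (j.1.2 (Additive.ofMul (pp (g₁ * g₂))))) =
      (fun j : J => aff (j.1.1 (hh g₁)) (j.1.2 (Additive.ofMul (pp g₁)))) *
      (fun j : J => aff (j.1.1 (hh g₂)) (j.1.2 (Additive.ofMul (pp g₂)))) := by
    intro g₁ g₂
    funext j
    show _ = aff (j.1.1 (hh g₁)) (j.1.2 (Additive.ofMul (pp g₁))) *
      aff (j.1.1 (hh g₂)) (j.1.2 (Additive.ofMul (pp g₂)))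
    rw [aff_mul, hh_mul, map_mul, pp_mul, ofMul_mul, map_add]
    have e2 : j.1.2 (Additive.ofMul (⟨(hh g₁ : G) * (pp g₂ : G) * (hh g₁ : G)⁻¹, conjmem _ _⟩ : ↥P))
        = (j.1.1 (hh g₁) : ZMod 3) * j.1.2 (Additive.ofMul (pp g₂)) :=
      j.2 (hh g₁) (Additive.ofMul (pp g₂))
    rw [e2, add_comm]
  let F0 : G →* (J → Equiv.Perm (ZMod 3)) := MonoidHom.mk'
    (fun g => fun j : J => aff (j.1.1 (hh g)) (j.1.2 (Additive.ofMul (pp g)))) Fmul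
  have hinj : Function.Injective F0 := by
    rw [injective_iff_map_eq_one]
    intro g hg
    have hH1 : hh g = 1 := by
      by_contra hne
      obtain ⟨χ, hχ⟩ := exists_char2 hHsq hne
      have hj : ∀ (h : ↥H) (w : Additive ↥P),
          (0 : Additive ↥P →ₗ[ZMod 3] ZMod 3) (ρ h w)
            = (χ h : ZMod 3) * (0 : Additive ↥P →ₗ[ZMod 3] ZMod 3) w := by
        intro h w; simp
      have h1 := congrFun hg ⟨(χ, 0), hj⟩
      exact hχ (aff_eq_one _ _ h1).1
    have hP1 : pp g = 1 := by
      by_contra hne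
      have hv : (Additive.ofMul (pp g) : Additive ↥P) ≠ 0 := by
        intro h0
        exact hne (by simpa using congrArg Additive.toMul h0)
      have hnall : ¬ ∀ φ : Module.Dual (ZMod 3) (Additive ↥P), φ (Additive.ofMul (pp g)) = 0 := by
        rw [Module.forall_dual_apply_eq_zero_iff]; exact hv
      push_neg at hnall
      obtain ⟨ℓ₀, hℓ₀⟩ := hnall
      obtain ⟨ℓ', χ', hv', hch⟩ := exists_char ρ hρmul hρcomm hρinv hL ℓ₀ _ hℓ₀
      have h1 := congrFun hg ⟨(χ', ℓ'), hch⟩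
      exact hv' (aff_eq_one _ _ h1).2
    rw [← dec g, hH1, hP1]
    push_cast
    group
  -- reindex by Fin m and transport Perm (ZMod 3) to Perm (Fin 3)
  obtain ⟨m, ⟨e⟩⟩ := Finite.exists_equiv_fin J
  let eqv : ZMod 3 ≃ Fin 3 := Equiv.refl (Fin 3)
  have permmul : ∀ σ τ : Equiv.Perm (ZMod 3),
      eqv.permCongr (σ * τ) = eqv.permCongr σ * eqv.permCongr τ := by
    intro σ τ; ext x; simp [Equiv.permCongr, Equiv.Perm.mul_apply]
  refine ⟨m, MonoidHom.mk' (fun g => fun i => eqv.permCongr (F0 g (e.symm i))) ?_, ?_⟩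
  · intro g₁ g₂
    funext i
    show eqv.permCongr (F0 (g₁ * g₂) (e.symm i)) = _
    have h1 := congrFun (map_mul F0 g₁ g₂) (e.symm i)
    rw [Pi.mul_apply] at h1
    rw [h1, permmul]
    rfl
  · intro g₁ g₂ hgg
    apply hinj
    funext j
    have h1 : eqv.permCongr (F0 g₁ (e.symm (e j))) = eqv.permCongr (F0 g₂ (e.symm (e j))) :=
      congrFun hgg (e j)
    rw [e.symm_apply_apply] at h1
    exact eqv.permCongr.injective h1
end Setup

lemma perm3_cube : ∀ σ : Equiv.Perm (Fin 3), Equiv.Perm.sign σ = 1 → σ ^ 3 = 1 := by decide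
lemma perm3_comm : ∀ σ τ : Equiv.Perm (Fin 3), Equiv.Perm.sign σ = 1 →
    Equiv.Perm.sign τ = 1 → σ * τ = τ * σ := by decide

universe u

theorem generalizedS3Type_closure (G₁ : Type u) (G₂ : Type u) [Group G₁] [Group G₂]
    [Finite G₁] [Finite G₂]
    (h₁ : IsGeneralizedS3Type G₁) (h₂ : IsGeneralizedS3Type G₂) :
    IsGeneralizedS3Type (G₁ × G₂) ∧
      (∀ H : Subgroup G₁, IsGeneralizedS3Type H) ∧
      (∀ (Q : Type u) [Group Q] (f : G₁ →* Q), Function.Surjective f →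
        IsGeneralizedS3Type Q) := by
  obtain ⟨n₁, f₁, hf₁⟩ := h₁
  refine ⟨?_, ?_, ?_⟩
  · -- products
    obtain ⟨n₂, f₂, hf₂⟩ := h₂
    refine ⟨n₁ + n₂, MonoidHom.mk' (fun g => Fin.append (f₁ g.1) (f₂ g.2)) ?_, ?_⟩
    · intro g h
      funext i
      refine Fin.addCases (fun i0 => ?_) (fun i0 => ?_) i
      · show Fin.append (f₁ (g.1 * h.1)) (f₂ (g.2 * h.2)) (Fin.castAdd _ i0) =
          Fin.append (f₁ g.1) (f₂ g.2) (Fin.castAdd _ i0) *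
          Fin.append (f₁ h.1) (f₂ h.2) (Fin.castAdd _ i0)
        rw [Fin.append_left, Fin.append_left, Fin.append_left, map_mul, Pi.mul_apply]
      · show Fin.append (f₁ (g.1 * h.1)) (f₂ (g.2 * h.2)) (Fin.natAdd _ i0) =
          Fin.append (f₁ g.1) (f₂ g.2) (Fin.natAdd _ i0) *
          Fin.append (f₁ h.1) (f₂ h.2) (Fin.natAdd _ i0)
        rw [Fin.append_right, Fin.append_right, Fin.append_right, map_mul, Pi.mul_apply]
    · intro g h hgh
      have e1 : f₁ g.1 = f₁ h.1 := by
        funext i0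
        have h3 : Fin.append (f₁ g.1) (f₂ g.2) (Fin.castAdd n₂ i0) =
            Fin.append (f₁ h.1) (f₂ h.2) (Fin.castAdd n₂ i0) := congrFun hgh (Fin.castAdd n₂ i0)
        rwa [Fin.append_left, Fin.append_left] at h3
      have e2 : f₂ g.2 = f₂ h.2 := by
        funext i0
        have h3 : Fin.append (f₁ g.1) (f₂ g.2) (Fin.natAdd n₁ i0) =
            Fin.append (f₁ h.1) (f₂ h.2) (Fin.natAdd n₁ i0) := congrFun hgh (Fin.natAdd n₁ i0)
        rwa [Fin.append_right, Fin.append_right] at h3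
      exact Prod.ext (hf₁ e1) (hf₂ e2)
  · -- subgroups
    intro H
    exact ⟨n₁, f₁.comp H.subtype, hf₁.comp H.subtype_injective⟩
  · -- quotients
    intro Q _ φ hφ
    haveI : Finite Q := Finite.of_surjective φ hφ
    -- the componentwise sign map
    let s : (Fin n₁ → Equiv.Perm (Fin 3)) →* (Fin n₁ → ℤˣ) :=
      MonoidHom.mk' (fun σ i => Equiv.Perm.sign (σ i)) (by
        intro σ τ
        funext i
        show Equiv.Perm.sign ((σ * τ) i) = Equiv.Perm.sign (σ i) * Equiv.Perm.sign (τ i)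
        rw [Pi.mul_apply, map_mul])
    let K : Subgroup G₁ := MonoidHom.ker (s.comp f₁)
    haveI : K.Normal := MonoidHom.normal_ker _
    let P : Subgroup Q := K.map φ
    haveI : P.Normal := Subgroup.Normal.map ‹K.Normal› φ hφ
    have memK : ∀ g : G₁, g ∈ K ↔ ∀ i, Equiv.Perm.sign (f₁ g i) = 1 := by
      intro g
      constructor
      · intro hg i
        exact congrFun (by exact hg : (fun i => Equiv.Perm.sign (f₁ g i)) = 1) i
      · intro hg
        show (fun i => Equiv.Perm.sign (f₁ g i)) = 1
        funext i; exact hg i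
    refine lemmaA P ?_ ?_ ?_ ?_
    · -- exponent 3
      rintro x ⟨g, hg, rfl⟩
      rw [← map_pow]
      have : g ^ 3 = 1 := by
        apply hf₁
        rw [map_pow, map_one]
        funext i
        rw [Pi.pow_apply, Pi.one_apply]
        exact perm3_cube _ ((memK g).mp hg i)
      rw [this, map_one]
    · -- commutativity
      rintro x ⟨g, hg, rfl⟩ y ⟨g', hg', rfl⟩
      rw [← map_mul, ← map_mul]
      congr 1
      apply hf₁
      rw [map_mul, map_mul]
      funext i
      rw [Pi.mul_apply, Pi.mul_apply]
      exact perm3_comm _ _ ((memK g).mp hg i) ((memK g').mp hg' i)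
    · -- squares in P
      intro q
      obtain ⟨g, rfl⟩ := hφ q
      rw [← map_pow]
      refine ⟨g ^ 2, (memK _).mpr fun i => ?_, rfl⟩
      rw [map_pow, Pi.pow_apply, map_pow, Int.units_sq]
    · -- commutators in P
      intro q r
      obtain ⟨g, rfl⟩ := hφ q
      obtain ⟨g', rfl⟩ := hφ r
      refine ⟨g * g' * g⁻¹ * g'⁻¹, (memK _).mpr fun i => ?_,
        by rw [map_mul, map_mul, map_mul, map_inv, map_inv]⟩
      have : Equiv.Perm.sign (f₁ (g * g' * g⁻¹ * g'⁻¹) i) =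
          Equiv.Perm.sign (f₁ g i) * Equiv.Perm.sign (f₁ g' i) *
          (Equiv.Perm.sign (f₁ g i))⁻¹ * (Equiv.Perm.sign (f₁ g' i))⁻¹ := by
        rw [map_mul, map_mul, map_inv, map_inv]
        simp only [Pi.mul_apply, Pi.inv_apply, map_mul, map_inv]
      rw [this, mul_comm (Equiv.Perm.sign (f₁ g i)) (Equiv.Perm.sign (f₁ g' i))]
      group
end

section
/- Let K₂/K₁ be a finite Galois extension of number fields whose degree is a power of a prime q, let p be a prime distinct from q, and let E be an elliptic curve defined over ℚ. If the p-torsion subgroups satisfy E(K₁)[p] = E(K₂)[p], then the p-primary torsion subgroups satisfy E(K₁)(p) = E(K₂)(p); that is, if the p-torsion of E does not grow from K₁ to K₂, then neither does the p-primary torsion. -/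
open WeierstrassCurve WeierstrassCurve.Affine

section Aux

open Classical

variable (p q : ℕ) (K₁ K₂ : Type) [Field K₁] [Field K₂] [NumberField K₁] [NumberField K₂]
    [Algebra K₁ K₂] [IsGalois K₁ K₂]
    (E : WeierstrassCurve ℚ) [E.IsElliptic]

/-- The action of `σ` on points. -/
noncomputable def galAct (σ : K₂ ≃ₐ[K₁] K₂) : (E.toAffine⁄K₂).Point →+ (E.toAffine⁄K₂).Point :=
  Affine.Point.map (W' := E.toAffine) (σ.toAlgHom.restrictScalars ℚ)

variable {K₁ K₂ E}

omit [IsGalois K₁ K₂] [E.IsElliptic] in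
lemma galAct_fixed_of_range (σ : K₂ ≃ₐ[K₁] K₂) (Q : (E.toAffine⁄K₁).Point) :
    galAct K₁ K₂ E σ (Affine.Point.map (W' := E.toAffine) (IsScalarTower.toAlgHom ℚ K₁ K₂) Q) =
      Affine.Point.map (W' := E.toAffine) (IsScalarTower.toAlgHom ℚ K₁ K₂) Q := by
  unfold galAct
  rw [Affine.Point.map_map]
  have h : (σ.toAlgHom.restrictScalars ℚ).comp (IsScalarTower.toAlgHom ℚ K₁ K₂) =
      IsScalarTower.toAlgHom ℚ K₁ K₂ := by
    ext a; exact σ.commutes a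
  rw [h]

omit [E.IsElliptic] in
lemma exists_of_fixed (P : (E.toAffine⁄K₂).Point)
    (hfix : ∀ σ : K₂ ≃ₐ[K₁] K₂, galAct K₁ K₂ E σ P = P) :
    ∃ Q : (E.toAffine⁄K₁).Point,
      Affine.Point.map (W' := E.toAffine) (IsScalarTower.toAlgHom ℚ K₁ K₂) Q = P := by
  cases P with
  | zero => exact ⟨0, rfl⟩
  | @some x y h =>
    have hx : ∀ σ : K₂ ≃ₐ[K₁] K₂, σ x = x ∧ σ y = y := by
      intro σ
      have := hfix σ
      unfold galAct at this
      rw [Affine.Point.map_some] at this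
      exact ⟨(Affine.Point.some.inj this).1, (Affine.Point.some.inj this).2⟩
    have hxb : x ∈ (⊥ : IntermediateField K₁ K₂) := by
      rw [← IsGalois.fixedField_fixingSubgroup (⊥ : IntermediateField K₁ K₂)]
      exact fun σ => (hx σ.1).1
    have hyb : y ∈ (⊥ : IntermediateField K₁ K₂) := by
      rw [← IsGalois.fixedField_fixingSubgroup (⊥ : IntermediateField K₁ K₂)]
      exact fun σ => (hx σ.1).2
    obtain ⟨x₀, hx₀⟩ := IntermediateField.mem_bot.mp hxb
    obtain ⟨y₀, hy₀⟩ := IntermediateField.mem_bot.mp hyb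
    have h' : (E.toAffine⁄K₁).Nonsingular x₀ y₀ := by
      have := h
      rw [← hx₀, ← hy₀] at this
      exact (E.toAffine.baseChange_nonsingular (IsScalarTower.toAlgHom ℚ K₁ K₂).injective x₀ y₀).mp this
    refine ⟨Affine.Point.some _ _ h', ?_⟩
    rw [Affine.Point.map_some]
    simp only [Affine.Point.some.injEq]
    exact ⟨hx₀, hy₀⟩

end Aux

open Classical in
theorem torsion_primary_component_stable (p q : ℕ) (hp : Fact p.Prime) (hq : q.Prime)
    (hpq : p ≠ q) (m : ℕ)
    (K₁ K₂ : Type) [Field K₁] [Field K₂] [NumberField K₁] [NumberField K₂]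
    [Algebra K₁ K₂] [IsGalois K₁ K₂] (hdeg : Module.finrank K₁ K₂ = q ^ m)
    (E : WeierstrassCurve ℚ) [E.IsElliptic]
    (hsame : ∀ P : (E.toAffine⁄K₂).Point, p • P = 0 →
      ∃ Q : (E.toAffine⁄K₁).Point,
        Affine.Point.map (W' := E.toAffine) (IsScalarTower.toAlgHom ℚ K₁ K₂) Q = P) :
    ∀ P : (E.toAffine⁄K₂).Point, P ∈ AddCommGroup.primaryComponent (E.toAffine⁄K₂).Point p →
      ∃ Q : (E.toAffine⁄K₁).Point,
        Affine.Point.map (W' := E.toAffine) (IsScalarTower.toAlgHom ℚ K₁ K₂) Q = P := by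
  -- reduce to: ∀ n P, p ^ n • P = 0 → ∃ Q, ...
  suffices key : ∀ n : ℕ, ∀ P : (E.toAffine⁄K₂).Point, p ^ n • P = 0 →
      ∃ Q : (E.toAffine⁄K₁).Point,
        Affine.Point.map (W' := E.toAffine) (IsScalarTower.toAlgHom ℚ K₁ K₂) Q = P by
    intro P hP
    obtain ⟨n, hn⟩ := hP
    exact key n P hn
  intro n
  induction n with
  | zero =>
    intro P hP
    rw [pow_zero, one_smul] at hP
    exact ⟨0, by rw [hP]; rfl⟩
  | succ n ih =>
    intro P hP
    apply exists_of_fixed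
    intro σ
    set D : (E.toAffine⁄K₂).Point := galAct K₁ K₂ E σ P - P with hD
    -- p ^ n • (p • P) = 0
    have hpnP : p • (p ^ n • P) = 0 := by
      rw [← mul_smul, ← pow_succ']; exact hP
    -- p ^ n • P is fixed by σ
    have hfixpn : galAct K₁ K₂ E σ (p ^ n • P) = p ^ n • P := by
      obtain ⟨Q, hQ⟩ := hsame (p ^ n • P) hpnP
      rw [← hQ]; exact galAct_fixed_of_range σ Q
    -- D is killed by p ^ n
    have hDkill : p ^ n • D = 0 := by
      rw [hD, smul_sub, ← map_nsmul, hfixpn, sub_self]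
    -- D is fixed by σ (since it comes from K₁ by ih)
    have hDfix : galAct K₁ K₂ E σ D = D := by
      obtain ⟨Q, hQ⟩ := ih D hDkill
      rw [← hQ]; exact galAct_fixed_of_range σ Q
    -- iterate: galAct σ^k P = P + k • D
    have hiter : ∀ k : ℕ, galAct K₁ K₂ E (σ ^ k) P = P + k • D := by
      intro k
      induction k with
      | zero =>
        rw [pow_zero, zero_smul, add_zero]
        show Affine.Point.map (W' := E.toAffine) _ P = P
        cases P <;> rfl
      | succ k ihk =>
        have hcomp : galAct K₁ K₂ E (σ ^ (k + 1)) P =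
            galAct K₁ K₂ E σ (galAct K₁ K₂ E (σ ^ k) P) := by
          unfold galAct
          rw [Affine.Point.map_map]
          congr 2
          ext a
          rw [pow_succ']
          rfl
        have hσP : galAct K₁ K₂ E σ P = P + D := by rw [hD]; abel
        rw [hcomp, ihk, map_add, map_nsmul, hDfix, hσP, succ_nsmul]
        abel
    -- σ ^ (q ^ m) = 1
    have : FiniteDimensional K₁ K₂ := inferInstance
    have hord : σ ^ (q ^ m) = 1 := by
      rw [← hdeg, ← IsGalois.card_aut_eq_finrank K₁ K₂]
      exact pow_card_eq_one'
    -- q ^ m • D = 0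
    have hqD : (q ^ m) • D = 0 := by
      have := hiter (q ^ m)
      rw [hord] at this
      have h1 : galAct K₁ K₂ E (1 : K₂ ≃ₐ[K₁] K₂) P = P := by
        show Affine.Point.map (W' := E.toAffine) _ P = P
        cases P <;> rfl
      rw [h1] at this
      exact (left_eq_add.mp this)
    -- coprimality forces D = 0
    have hcop : Nat.Coprime (p ^ n) (q ^ m) :=
      ((Nat.coprime_primes hp.out hq).mpr hpq).pow n m
    have hDord : addOrderOf D ∣ Nat.gcd (p ^ n) (q ^ m) :=
      Nat.dvd_gcd (addOrderOf_dvd_of_nsmul_eq_zero hDkill)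
        (addOrderOf_dvd_of_nsmul_eq_zero hqD)
    have h1 : addOrderOf D = 1 := Nat.dvd_one.mp (hcop ▸ hDord)
    have hD0 : D = 0 := AddMonoid.addOrderOf_eq_one_iff.mp h1
    rw [hD] at hD0
    exact sub_eq_zero.mp hD0
end

section
/- The elliptic curve y² = x(x² − 6x + 13) over ℚ has Mordell–Weil group isomorphic to ℤ/2ℤ; that is, it has rank 0 and its only rational points are the point at infinity and (0,0). -/
open WeierstrassCurve WeierstrassCurve.Affine

section DescentLemmas


-- mod 16 parity lemma
lemma par16 (a e b : ℤ) (hcop : IsCoprime a e)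
    (h : b^2 = a^4 - 6*a^2*e^2 + 13*e^4) : Odd a ∧ Even e := by
  rcases Int.even_or_odd a with ha | ha <;> rcases Int.even_or_odd e with he | he
  · exfalso
    obtain ⟨x, rfl⟩ := ha; obtain ⟨y, rfl⟩ := he
    have h2 : ¬ IsUnit (2:ℤ) := by decide
    exact h2 (hcop.isUnit_of_dvd' ⟨x, by ring⟩ ⟨y, by ring⟩)
  · exfalso
    obtain ⟨x, rfl⟩ := ha; obtain ⟨y, rfl⟩ := he
    have h16 : ((b : ZMod 16))^2 = ((x:ZMod 16)+x)^4 - 6*((x:ZMod 16)+x)^2*(2*(y:ZMod 16)+1)^2 + 13*(2*(y:ZMod 16)+1)^4 := by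
      have := congrArg (Int.cast : ℤ → ZMod 16) h
      push_cast at this
      exact this
    revert h16
    generalize (b : ZMod 16) = B; generalize (x : ZMod 16) = X; generalize (y : ZMod 16) = Y
    revert B X Y; decide
  · exact ⟨ha, he⟩
  · exfalso
    obtain ⟨x, rfl⟩ := ha; obtain ⟨y, rfl⟩ := he
    have h16 : ((b : ZMod 16))^2 = (2*(x:ZMod 16)+1)^4 - 6*(2*(x:ZMod 16)+1)^2*(2*(y:ZMod 16)+1)^2 + 13*(2*(y:ZMod 16)+1)^4 := by
      have := congrArg (Int.cast : ℤ → ZMod 16) h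
      push_cast at this
      exact this
    revert h16
    generalize (b : ZMod 16) = B; generalize (x : ZMod 16) = X; generalize (y : ZMod 16) = Y
    revert B X Y; decide


lemma par8 (a u v : ℤ) (ha : Odd a) (hcop : IsCoprime u v)
    (h : a^2 = u^4 + 3*u^2*v^2 - v^4) : Odd u ∧ Even v := by
  obtain ⟨z, rfl⟩ := ha
  rcases Int.even_or_odd u with hu | hu <;> rcases Int.even_or_odd v with hv | hv
  · exfalso
    obtain ⟨x, rfl⟩ := hu; obtain ⟨y, rfl⟩ := hv
    have h2 : ¬ IsUnit (2:ℤ) := by decide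
    exact h2 (hcop.isUnit_of_dvd' ⟨x, by ring⟩ ⟨y, by ring⟩)
  · exfalso
    obtain ⟨x, rfl⟩ := hu; obtain ⟨y, rfl⟩ := hv
    have h8 : (2*(z:ZMod 8)+1)^2 = ((x:ZMod 8)+x)^4 + 3*((x:ZMod 8)+x)^2*(2*(y:ZMod 8)+1)^2 - (2*(y:ZMod 8)+1)^4 := by
      have := congrArg (Int.cast : ℤ → ZMod 8) h
      push_cast at this
      exact this
    revert h8
    generalize (z : ZMod 8) = Z; generalize (x : ZMod 8) = X; generalize (y : ZMod 8) = Y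
    revert Z X Y; decide
  · exact ⟨hu, hv⟩
  · exfalso
    obtain ⟨x, rfl⟩ := hu; obtain ⟨y, rfl⟩ := hv
    have h8 : (2*(z:ZMod 8)+1)^2 = (2*(x:ZMod 8)+1)^4 + 3*(2*(x:ZMod 8)+1)^2*(2*(y:ZMod 8)+1)^2 - (2*(y:ZMod 8)+1)^4 := by
      have := congrArg (Int.cast : ℤ → ZMod 8) h
      push_cast at this
      exact this
    revert h8
    generalize (z : ZMod 8) = Z; generalize (x : ZMod 8) = X; generalize (y : ZMod 8) = Y
    revert Z X Y; decide


lemma isCoprime_two_of_odd (a : ℤ) (ha : Odd a) : IsCoprime a 2 := by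
  obtain ⟨k, rfl⟩ := ha
  exact ⟨1, -k, by ring⟩

lemma sq_pos_of_coprime_factor {X c : ℤ} (hpos : 0 < X) (hX : X = c^2 ∨ X = -c^2) :
    ∃ d : ℤ, X = d^2 ∧ 0 < d := by
  rcases hX with h | h
  · refine ⟨|c|, by rw [sq_abs]; exact h, ?_⟩
    rcases (abs_nonneg c).lt_or_eq with h' | h'
    · exact h'
    · exfalso; rw [h, ← sq_abs, ← h'] at hpos; simp at hpos
  · exfalso; nlinarith [sq_nonneg c]

lemma finish_step (P Q W u : ℤ) (hP : 0 < P) (hQ : 0 < Q) (hW : 0 < W)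
    (hco : IsCoprime P Q) (hPQ : P * Q = 13 * W^4) (h13 : (13:ℤ) ∣ P)
    (hc : u^2 = P + Q - 6*W^2) :
    ∃ p q : ℤ, 0 < p ∧ 0 < q ∧ IsCoprime q p ∧ p ∣ W ∧
      u^2 = q^4 - 6*q^2*p^2 + 13*p^4 := by
  obtain ⟨P', rfl⟩ := h13
  have hP' : 0 < P' := by nlinarith
  have hPQ' : P' * Q = (W^2)^2 := by
    have h13ne : (13:ℤ) ≠ 0 := by norm_num
    have h2 : 13 * (P' * Q) = 13 * (W^2)^2 := by linear_combination hPQ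
    exact mul_left_cancel₀ h13ne h2
  have hco' : IsCoprime P' Q := hco.of_isCoprime_of_dvd_left ⟨13, mul_comm _ _⟩
  obtain ⟨r0, hr0⟩ := Int.sq_of_isCoprime hco' hPQ'
  obtain ⟨r, hr, hrpos⟩ := sq_pos_of_coprime_factor hP' hr0
  obtain ⟨s0, hs0⟩ := Int.sq_of_isCoprime hco'.symm
    (by linear_combination hPQ' : Q * P' = (W^2)^2)
  obtain ⟨s, hs, hspos⟩ := sq_pos_of_coprime_factor hQ hs0
  have hrs : r * s = W^2 := by
    have h1 : (r*s - W^2)*(r*s + W^2) = 0 := by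
      have h3 : (r^2) * (s^2) = (W^2)^2 := by rw [← hr, ← hs]; exact hPQ'
      linear_combination h3
    rcases mul_eq_zero.mp h1 with h | h
    · linarith
    · nlinarith [mul_pos hrpos hspos, sq_nonneg W]
  have hcors : IsCoprime r s := by
    have h2 : IsCoprime (r^2) (s^2) := by rw [← hr, ← hs]; exact hco'
    exact (h2.of_isCoprime_of_dvd_left (dvd_pow_self r two_ne_zero)).of_isCoprime_of_dvd_right
      (dvd_pow_self s two_ne_zero)
  obtain ⟨p0, hp0⟩ := Int.sq_of_isCoprime hcors hrs
  obtain ⟨p, hp, hppos⟩ := sq_pos_of_coprime_factor hrpos hp0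
  obtain ⟨q0, hq0⟩ := Int.sq_of_isCoprime hcors.symm (by linear_combination hrs : s * r = W^2)
  obtain ⟨q, hq, hqpos⟩ := sq_pos_of_coprime_factor hspos hq0
  have hW2 : W^2 = p^2 * q^2 := by rw [← hrs, hp, hq]
  have hpW : p ∣ W := by
    have h1 : (p*q - W)*(p*q + W) = 0 := by linear_combination -hW2
    rcases mul_eq_zero.mp h1 with h | h
    · exact ⟨q, by linear_combination -h⟩
    · exact ⟨-q, by linear_combination h⟩
  have hcoqp : IsCoprime q p := by
    have h2 : IsCoprime (p^4) (q^4) := by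
      rw [show p^4 = P' from by rw [hr, hp]; ring, show q^4 = Q from by rw [hs, hq]; ring]
      exact hco'
    exact ((h2.of_isCoprime_of_dvd_left (dvd_pow_self p four_ne_zero)).of_isCoprime_of_dvd_right
      (dvd_pow_self q four_ne_zero)).symm
  refine ⟨p, q, hppos, hqpos, hcoqp, hpW, ?_⟩
  have hP'eq : P' = p^4 := by rw [hr, hp]; ring
  have hQeq : Q = q^4 := by rw [hs, hq]; ring
  linear_combination hc + 13*hP'eq + hQeq - 6*hW2

lemma descent : ∀ (e : ℕ) (a b : ℤ), 0 < a → 0 < (e:ℤ) → IsCoprime a (e:ℤ) →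
    b^2 = a^4 - 6*a^2*(e:ℤ)^2 + 13*(e:ℤ)^4 → False := by
  intro e
  induction e using Nat.strong_induction_on with
  | _ e ih =>
  intro a b ha hE hcop h
  set E : ℤ := (e:ℤ) with hEdef
  obtain ⟨haodd, heeven⟩ := par16 a E b hcop h
  -- the Pythagorean triple
  have hPT : PythagoreanTriple (a^2 - 3*E^2) (2*E^2) b := by
    unfold PythagoreanTriple
    linear_combination -h
  have hxodd : Odd (a^2 - 3*E^2) := by
    rcases haodd with ⟨k, hk⟩; rcases heeven with ⟨l, hl⟩
    exact ⟨2*k^2 + 2*k - 6*l^2, by rw [hk, hl]; ring⟩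
  have hcoxy : Int.gcd (a^2 - 3*E^2) (2*E^2) = 1 := by
    rw [← Int.isCoprime_iff_gcd_eq_one]
    have c1 : IsCoprime (a^2 - 3*E^2) E := by
      have h0 : IsCoprime (a^2) E := IsCoprime.pow_left hcop
      have := h0.add_mul_right_left (-3*E)
      rwa [show a^2 + -3*E*E = a^2 - 3*E^2 by ring] at this
    exact (isCoprime_two_of_odd _ hxodd).mul_right (IsCoprime.pow_right c1)
  obtain ⟨m, n, hmn, hz, hmnco, hpar⟩ :=
    PythagoreanTriple.coprime_classification.mp ⟨hPT, hcoxy⟩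
  have hxy : a^2 - 3*E^2 = m^2 - n^2 ∧ 2*E^2 = 2*(m*n) := by
    rcases hmn with ⟨h1, h2⟩ | ⟨h1, h2⟩
    · exact ⟨h1, by rw [h2]; ring⟩
    · exfalso
      exact (Int.not_odd_iff_even.mpr ⟨m*n, by rw [h1]; ring⟩) hxodd
  obtain ⟨hx, hy⟩ := hxy
  have hmnE : m * n = E^2 := by
    have := mul_left_cancel₀ (two_ne_zero (α := ℤ)) hy
    linarith
  -- make m, n positive
  obtain ⟨m', n', hm', hn', hx', hmn', hco'⟩ :
      ∃ m' n', 0 < m' ∧ 0 < n' ∧ a^2 - 3*E^2 = m'^2 - n'^2 ∧ m' * n' = E^2 ∧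
        Int.gcd m' n' = 1 := by
    have hmne : m * n ≠ 0 := by rw [hmnE]; positivity
    rcases lt_trichotomy m 0 with hm | hm | hm
    · have hn : n < 0 := by
        by_contra hn
        push_neg at hn
        nlinarith [pow_pos hE 2]
      exact ⟨-m, -n, by linarith, by linarith, by rw [hx]; ring, by rw [← hmnE]; ring,
        by rw [Int.neg_gcd, Int.gcd_neg]; exact hmnco⟩
    · exact absurd (by rw [hm]; ring) hmne
    · have hn : 0 < n := by
        rcases lt_trichotomy n 0 with hn | hn | hn
        · exfalso; nlinarith [pow_pos hE 2]
        · exact absurd (by rw [hn]; ring) hmne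
        · exact hn
      exact ⟨m, n, hm, hn, hx, hmnE, hmnco⟩
  have hcomn : IsCoprime m' n' := Int.isCoprime_iff_gcd_eq_one.mpr hco'
  obtain ⟨u0, hu0⟩ := Int.sq_of_isCoprime hcomn hmn'
  obtain ⟨u, hu, hupos⟩ := sq_pos_of_coprime_factor hm' hu0
  obtain ⟨v0, hv0⟩ := Int.sq_of_isCoprime hcomn.symm (by linear_combination hmn' : n' * m' = E^2)
  obtain ⟨v, hv, hvpos⟩ := sq_pos_of_coprime_factor hn' hv0
  have hEuv : E = u * v := by
    have h1 : (u*v - E)*(u*v + E) = 0 := by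
      have h2 : (u*v)^2 = E^2 := by rw [← hmn', hu, hv]; ring
      linear_combination h2
    rcases mul_eq_zero.mp h1 with hh | hh
    · linarith
    · nlinarith [mul_pos hupos hvpos]
  have hcouv : IsCoprime u v := by
    have h2 : IsCoprime (u^2) (v^2) := by rw [← hu, ← hv]; exact hcomn
    exact (h2.of_isCoprime_of_dvd_left (dvd_pow_self u two_ne_zero)).of_isCoprime_of_dvd_right
      (dvd_pow_self v two_ne_zero)
  have h8 : a^2 = u^4 + 3*u^2*v^2 - v^4 := by
    linear_combination hx' + (m' + u^2)*hu - (n' + v^2)*hv + 3*(E + u*v)*hEuv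
  obtain ⟨huodd, hveven⟩ := par8 a u v haodd hcouv h8
  obtain ⟨W, rfl⟩ := hveven
  have hW : 0 < W := by linarith
  -- halves
  have hcodd : Odd (u^2 + 6*W^2) := by
    rcases huodd with ⟨k, hk⟩
    exact ⟨2*k^2 + 2*k + 3*W^2, by rw [hk]; ring⟩
  obtain ⟨P, hPdef⟩ := hcodd.sub_odd haodd
  obtain ⟨Q, hQdef⟩ := hcodd.add_odd haodd
  -- here hPdef : u^2+6*W^2 - a = P + P, hQdef : u^2+6*W^2 + a = Q + Q
  have hPQ : P * Q = 13 * W^4 := by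
    have h4 : 4*(P*Q) = 4*(13*W^4) := by
      linear_combination (-1)*h8 - (2*Q)*hPdef - (u^2+6*W^2-a)*hQdef
    exact mul_left_cancel₀ (by norm_num : (4:ℤ) ≠ 0) h4
  have hha : (u^2+6*W^2 - a)*(u^2+6*W^2 + a) = 52*W^4 := by linear_combination -h8
  have hcpos : 0 < u^2 + 6*W^2 := by positivity
  have hcapos : 0 < u^2 + 6*W^2 - a := by
    by_contra hcon
    push_neg at hcon
    have h1 : (0:ℤ) ≤ u^2+6*W^2 + a := by linarith
    have h2 : (u^2+6*W^2 - a)*(u^2+6*W^2 + a) ≤ 0 :=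
      mul_nonpos_iff.mpr (Or.inr ⟨by linarith, h1⟩)
    linarith [pow_pos hW 4]
  have hPpos : 0 < P := by linarith
  have hQpos : 0 < Q := by linarith
  -- coprimality of P and Q
  have hcoPQ : IsCoprime P Q := by
    rw [Int.isCoprime_iff_gcd_eq_one]
    by_contra hg
    obtain ⟨t, htp, htdvd⟩ := Nat.exists_prime_and_dvd hg
    have htprime : Prime (t:ℤ) := Nat.prime_iff_prime_int.mp htp
    have htP : (t:ℤ) ∣ P :=
      dvd_trans (Int.natCast_dvd_natCast.mpr htdvd) (Int.gcd_dvd_left P Q)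
    have htQ : (t:ℤ) ∣ Q :=
      dvd_trans (Int.natCast_dvd_natCast.mpr htdvd) (Int.gcd_dvd_right P Q)
    have hta : (t:ℤ) ∣ a := by
      have haQP : a = Q - P := by linarith
      rw [haQP]; exact dvd_sub htQ htP
    have ht13W : (t:ℤ) ∣ 13*W^4 := by
      rw [← hPQ]; exact htP.mul_right Q
    have htW : (t:ℤ) ∣ W := by
      rcases htprime.dvd_mul.mp ht13W with h13 | hW4
      · have ht13 : t = 13 := by
          have h' : t ∣ 13 := by exact_mod_cast h13
          exact (Nat.prime_dvd_prime_iff_eq htp (by norm_num)).mp h'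
        subst ht13
        have h169 : ((13:ℤ)*13) ∣ P * Q := by
          push_cast at htP htQ
          exact mul_dvd_mul htP htQ
        rw [hPQ] at h169
        obtain ⟨k, hk⟩ := h169
        have h13W4 : (13:ℤ) ∣ W^4 := ⟨k, by linarith⟩
        have : (13:ℤ) ∣ W := by
          refine Prime.dvd_of_dvd_pow (p := (13:ℤ)) (by norm_num) h13W4
        exact_mod_cast this
      · exact htprime.dvd_of_dvd_pow hW4
    have htu : (t:ℤ) ∣ u := by
      have htc : (t:ℤ) ∣ u^2 + 6*W^2 := by
        have hc' : u^2+6*W^2 = P + Q := by linarith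
        rw [hc']; exact dvd_add htP htQ
      have h6 : (t:ℤ) ∣ 6*W^2 := ((dvd_pow htW two_ne_zero).mul_left 6)
      have hu2 : (t:ℤ) ∣ u^2 := by
        have := dvd_sub htc h6
        rwa [show u^2 + 6*W^2 - 6*W^2 = u^2 by ring] at this
      exact htprime.dvd_of_dvd_pow hu2
    have htv : (t:ℤ) ∣ W + W := dvd_add htW htW
    exact htprime.not_unit (hcouv.isUnit_of_dvd' htu htv)
  -- apply the finishing step
  have prime13 : Prime (13:ℤ) := by norm_num
  have h13PQ : (13:ℤ) ∣ P * Q := ⟨W^4, hPQ⟩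
  have hfin : ∃ p q : ℤ, 0 < p ∧ 0 < q ∧ IsCoprime q p ∧ p ∣ W ∧
      q^2*0 + u^2 = q^4 - 6*q^2*p^2 + 13*p^4 := by
    rcases prime13.dvd_mul.mp h13PQ with h13 | h13
    · obtain ⟨p, q, h1, h2, h3, h4, h5⟩ :=
        finish_step P Q W u hPpos hQpos hW hcoPQ hPQ h13 (by linarith)
      exact ⟨p, q, h1, h2, h3, h4, by linarith⟩
    · obtain ⟨p, q, h1, h2, h3, h4, h5⟩ :=
        finish_step Q P W u hQpos hPpos hW hcoPQ.symm (by linear_combination hPQ) h13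
          (by linarith)
      exact ⟨p, q, h1, h2, h3, h4, by linarith⟩
  obtain ⟨p, q, hppos, hqpos, hcoqp, hpW, heq⟩ := hfin
  -- size decrease: p ≤ W < W + W = v ≤ u*v = E
  have hpW' : p ≤ W := Int.le_of_dvd hW hpW
  have hvE : W + W ≤ E := by
    rw [hEuv]
    have h1 : (1:ℤ) ≤ u := hupos
    have h2 : (0:ℤ) ≤ W + W := by linarith
    calc W + W = 1 * (W+W) := (one_mul _).symm
      _ ≤ u * (W+W) := mul_le_mul_of_nonneg_right h1 h2
  have hpE : p < E := by linarith
  have htn : p.toNat < e := by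
    have hEe : E = (e:ℤ) := hEdef
    omega
  have hcast : ((p.toNat : ℕ) : ℤ) = p := Int.toNat_of_nonneg hppos.le
  exact ih p.toNat htn q u hqpos (by rw [hcast]; exact hppos)
    (by rw [hcast]; exact hcoqp) (by rw [hcast]; linarith)


lemma no_rat_point (x y : ℚ) (hx : x ≠ 0) (h : y^2 = x^3 - 6*x^2 + 13*x) : False := by
  set p : ℤ := x.num with hpdef
  set q : ℤ := (x.den : ℤ) with hqdef
  set r : ℤ := y.num with hrdef
  set s : ℤ := (y.den : ℤ) with hsdef
  have hq0 : 0 < q := by rw [hqdef]; exact_mod_cast x.pos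
  have hs0 : 0 < s := by rw [hsdef]; exact_mod_cast y.pos
  have hqQ : (q:ℚ) ≠ 0 := by exact_mod_cast hq0.ne'
  have hsQ : (s:ℚ) ≠ 0 := by exact_mod_cast hs0.ne'
  have hint : r^2 * q^3 = (p^3 - 6*p^2*q + 13*p*q^2) * s^2 := by
    have h' : (r:ℚ)^2 * (q:ℚ)^3 = ((p:ℚ)^3 - 6*(p:ℚ)^2*(q:ℚ) + 13*(p:ℚ)*(q:ℚ)^2) * (s:ℚ)^2 := by
      have hx' : x = (p:ℚ) / (q:ℚ) := by rw [hpdef, hqdef]; push_cast; exact (Rat.num_div_den x).symm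
      have hy' : y = (r:ℚ) / (s:ℚ) := by rw [hrdef, hsdef]; push_cast; exact (Rat.num_div_den y).symm
      rw [hx', hy'] at h
      field_simp at h
      have h2 : (q:ℚ)^3 * ((r:ℚ)^2*(q:ℚ)^3) =
          (q:ℚ)^3 * (((p:ℚ)^3 - 6*(p:ℚ)^2*(q:ℚ) + 13*(p:ℚ)*(q:ℚ)^2)*(s:ℚ)^2) := by
        linear_combination (q:ℚ)^3 * h
      exact mul_left_cancel₀ (pow_ne_zero 3 hqQ) h2
    exact_mod_cast h'
  have hcopq : IsCoprime p q := by
    rw [Int.isCoprime_iff_nat_coprime]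
    simpa [hpdef, hqdef] using x.reduced
  have hcors : IsCoprime r s := by
    rw [Int.isCoprime_iff_nat_coprime]
    simpa [hrdef, hsdef] using y.reduced
  have hcoqN : IsCoprime q (p^3 - 6*p^2*q + 13*p*q^2) := by
    have h0 : IsCoprime q (p^3) := IsCoprime.pow_right hcopq.symm
    have h1 := h0.add_mul_left_right (-6*p^2 + 13*p*q)
    rwa [show p^3 + q*(-6*p^2 + 13*p*q) = p^3 - 6*p^2*q + 13*p*q^2 by ring] at h1
  have hs2q3 : s^2 ∣ q^3 := by
    have hd : s^2 ∣ r^2 * q^3 := ⟨p^3 - 6*p^2*q + 13*p*q^2, by linear_combination hint⟩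
    exact ((hcors.symm.pow (m := 2) (n := 2)).dvd_of_dvd_mul_left hd)
  have hq3s2 : q^3 ∣ s^2 := by
    have hd : q^3 ∣ (p^3 - 6*p^2*q + 13*p*q^2) * s^2 := ⟨r^2, by linear_combination -hint⟩
    exact ((IsCoprime.pow_left hcoqN).dvd_of_dvd_mul_left hd)
  have hq3 : q^3 = s^2 := Int.dvd_antisymm (by positivity) (by positivity) hq3s2 hs2q3
  have hqs : q ∣ s := by
    rw [← Int.pow_dvd_pow_iff (two_ne_zero)]
    exact ⟨q, by linear_combination -hq3⟩
  obtain ⟨E, hEs⟩ := hqs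
  have hEpos : 0 < E := by nlinarith
  have hqE : q = E^2 := by
    have h2 : q^2 * q = q^2 * E^2 := by
      linear_combination hq3 + (s + q*E)*hEs
    exact mul_left_cancel₀ (pow_ne_zero 2 hq0.ne') h2
  have hrN : r^2 = p^3 - 6*p^2*q + 13*p*q^2 := by
    have h2 : q^3 * r^2 = q^3 * (p^3 - 6*p^2*q + 13*p*q^2) := by
      linear_combination hint - (p^3 - 6*p^2*q + 13*p*q^2)*hq3
    exact mul_left_cancel₀ (pow_ne_zero 3 hq0.ne') h2
  have hrM : r^2 = p * (p^2 - 6*p*E^2 + 13*E^4) := by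
    linear_combination hrN + (-6*p^2 + 13*p*(q + E^2))*hqE
  have hMpos : 0 < p^2 - 6*p*E^2 + 13*E^4 := by
    nlinarith [sq_nonneg (p - 3*E^2), pow_pos hEpos 4]
  have hppos : 0 < p := by
    have hpne : p ≠ 0 := by rw [hpdef]; exact Rat.num_ne_zero.mpr hx
    rcases hpne.lt_or_gt with h' | h'
    · exfalso; nlinarith [sq_nonneg r]
    · exact h'
  have hcopE : IsCoprime p E := by
    have h2 : IsCoprime p (E^2) := by rw [← hqE]; exact hcopq
    exact h2.of_isCoprime_of_dvd_right (dvd_pow_self E two_ne_zero)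
  have prime13 : Prime (13:ℤ) := by norm_num
  have hEcast : ((E.toNat : ℕ) : ℤ) = E := Int.toNat_of_nonneg hEpos.le
  by_cases h13p : (13:ℤ) ∣ p
  · -- case 13 ∣ p
    obtain ⟨P1, hP1⟩ := h13p
    have hP1pos : 0 < P1 := by omega
    have hM1 : r^2 = 169 * (P1 * (13*P1^2 - 6*P1*E^2 + E^4)) := by
      linear_combination hrM + (p^2 + 13*p*P1 + 169*P1^2 - 6*E^2*(p + 13*P1) + 13*E^4)*hP1
    have h13r : (13:ℤ) ∣ r := by
      refine prime13.dvd_of_dvd_pow (n := 2) ⟨13 * (P1 * (13*P1^2 - 6*P1*E^2 + E^4)), by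
        linear_combination hM1⟩
    obtain ⟨R, hR⟩ := h13r
    have hR2 : R^2 = P1 * (13*P1^2 - 6*P1*E^2 + E^4) := by
      have h2 : (169:ℤ) * R^2 = 169 * (P1 * (13*P1^2 - 6*P1*E^2 + E^4)) := by
        linear_combination hM1 - (r + 13*R)*hR
      exact mul_left_cancel₀ (by norm_num : (169:ℤ) ≠ 0) h2
    have hcoP1E : IsCoprime P1 E := hcopE.of_isCoprime_of_dvd_left ⟨13, by linear_combination hP1⟩
    have hcoP1M1 : IsCoprime P1 (13*P1^2 - 6*P1*E^2 + E^4) := by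
      have h0 : IsCoprime P1 (E^4) := IsCoprime.pow_right hcoP1E
      have h1 := h0.add_mul_left_right (13*P1 - 6*E^2)
      rwa [show E^4 + P1*(13*P1 - 6*E^2) = 13*P1^2 - 6*P1*E^2 + E^4 by ring] at h1
    obtain ⟨A0, hA0⟩ := Int.sq_of_isCoprime hcoP1M1 hR2.symm
    obtain ⟨A, hA, hApos⟩ := sq_pos_of_coprime_factor hP1pos hA0
    have hM1pos : 0 < 13*P1^2 - 6*P1*E^2 + E^4 := by
      nlinarith [sq_nonneg (E^2 - 3*P1), sq_nonneg P1]
    obtain ⟨B0, hB0⟩ := Int.sq_of_isCoprime hcoP1M1.symm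
      (by linear_combination -hR2 : (13*P1^2 - 6*P1*E^2 + E^4) * P1 = R^2)
    obtain ⟨B, hB, hBpos⟩ := sq_pos_of_coprime_factor hM1pos hB0
    have hcoEA : IsCoprime E A := by
      have h2 : IsCoprime (A^2) E := by rw [← hA]; exact hcoP1E
      exact (h2.of_isCoprime_of_dvd_left (dvd_pow_self A two_ne_zero)).symm
    refine descent A.toNat E B hEpos ?_ ?_ ?_
    · rw [Int.toNat_of_nonneg hApos.le]; exact hApos
    · rw [Int.toNat_of_nonneg hApos.le]; exact hcoEA
    · rw [Int.toNat_of_nonneg hApos.le]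
      linear_combination (13*(P1 + A^2) - 6*E^2)*hA - hB
  · -- case 13 ∤ p
    have hcop13 : IsCoprime p 13 := (prime13.coprime_iff_not_dvd.mpr h13p).symm
    have hcopM : IsCoprime p (p^2 - 6*p*E^2 + 13*E^4) := by
      have h0 : IsCoprime p (13*E^4) := hcop13.mul_right (IsCoprime.pow_right hcopE)
      have h1 := h0.add_mul_left_right (p - 6*E^2)
      rwa [show 13*E^4 + p*(p - 6*E^2) = p^2 - 6*p*E^2 + 13*E^4 by ring] at h1
    obtain ⟨A0, hA0⟩ := Int.sq_of_isCoprime hcopM hrM.symm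
    obtain ⟨A, hA, hApos⟩ := sq_pos_of_coprime_factor hppos hA0
    obtain ⟨B0, hB0⟩ := Int.sq_of_isCoprime hcopM.symm
      (by linear_combination -hrM : (p^2 - 6*p*E^2 + 13*E^4) * p = r^2)
    obtain ⟨B, hB, hBpos⟩ := sq_pos_of_coprime_factor hMpos hB0
    have hcoAE : IsCoprime A E := by
      have h2 : IsCoprime (A^2) E := by rw [← hA]; exact hcopE
      exact h2.of_isCoprime_of_dvd_left (dvd_pow_self A two_ne_zero)
    refine descent E.toNat A B hApos ?_ ?_ ?_
    · rw [hEcast]; exact hEpos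
    · rw [hEcast]; exact hcoAE
    · rw [hEcast]
      linear_combination (p + A^2 - 6*E^2)*hA - hB



end DescentLemmas

/-- The elliptic curve `y² = x(x² − 6x + 13) = x³ − 6x² + 13x` over `ℚ`. -/
def EDelta13 : WeierstrassCurve ℚ := ⟨0, -6, 0, 13, 0⟩

theorem mordellWeil_EDelta13 :
    Nonempty (EDelta13.toAffine.Point ≃+ ZMod 2) ∧
    ∀ P : EDelta13.toAffine.Point, P = 0 ∨
      ∃ h : EDelta13.toAffine.Nonsingular 0 0, P = WeierstrassCurve.Affine.Point.some 0 0 h := by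
  classical
  have h00 : EDelta13.toAffine.Nonsingular 0 0 := by
    rw [WeierstrassCurve.Affine.nonsingular_iff, WeierstrassCurve.Affine.equation_iff]
    norm_num [EDelta13]
  have hPts : ∀ P : EDelta13.toAffine.Point,
      P = 0 ∨ P = WeierstrassCurve.Affine.Point.some 0 0 h00 := by
    rintro (_ | @⟨x, y, h'⟩)
    · exact Or.inl rfl
    · right
      have heq : y^2 = x^3 - 6*x^2 + 13*x := by
        have h1 := (WeierstrassCurve.Affine.equation_iff _ _).mp h'.1
        simp only [EDelta13] at h1
        norm_num at h1
        linear_combination h1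
      by_cases hx : x = 0
      · subst hx
        have hy : y = 0 := by
          have : y^2 = 0 := by rw [heq]; ring
          exact pow_eq_zero_iff two_ne_zero |>.mp this
        subst hy
        rfl
      · exact absurd heq (fun hh => no_rat_point x y hx hh)
  set T : EDelta13.toAffine.Point := WeierstrassCurve.Affine.Point.some 0 0 h00 with hT
  have hTne : T ≠ 0 := WeierstrassCurve.Affine.Point.some_ne_zero h00
  have hTT : T + T = 0 := by
    rcases hPts (T + T) with h1 | h1
    · exact h1
    · exact absurd (add_eq_left.mp h1) hTne
  constructor
  · refine ⟨⟨⟨fun P => if P = 0 then 0 else 1, fun n => if n = 0 then 0 else T, ?_, ?_⟩, ?_⟩⟩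
    · intro P
      rcases hPts P with rfl | rfl
      · simp
      · simp [hTne]
    · intro n
      have h2 : ∀ m : ZMod 2, m = 0 ∨ m = 1 := by decide
      rcases h2 n with rfl | rfl
      · simp
      · simp [hTne]
    · intro a b
      rcases hPts a with rfl | rfl <;> rcases hPts b with rfl | rfl <;>
        simp [hTne, hTT]
      decide
  · intro P
    rcases hPts P with rfl | rfl
    · exact Or.inl rfl
    · exact Or.inr ⟨h00, rfl⟩
end

section
/- Let d ≥ 2 and let ℚ(d^∞) be the compositum inside ℚ̄ of all degree-d extensions of ℚ. Then for any finite Galois extension K/ℚ contained in ℚ(d^∞), the exponent of Gal(K/ℚ) divides the exponent of the symmetric group S_d. Consequently, ℚ(d^∞) contains only finitely many roots of unity. -/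
open Polynomial

/-! ### Auxiliary number-theoretic lemmas -/

private lemma step_odd {p : ℕ} (hp : p.Prime) (hodd : Odd p) {s : ℕ} (hs : 1 ≤ s) (u : ℤ) :
    ∃ m : ℤ, (1 + (p:ℤ)^s * u)^p = 1 + (p:ℤ)^(s+1) * (u + p * m) := by
  have hne2 : p ≠ 2 := by rintro rfl; revert hodd; decide
  have hp3 : 3 ≤ p := by have := hp.two_le; omega
  set P : ℤ := (p : ℤ) with hP
  set x : ℤ := P^s * u with hx
  have hsum : (1 + x)^p = ∑ k ∈ Finset.range (p+1), x ^ k * (p.choose k : ℤ) := by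
    rw [add_comm, add_pow]; simp
  have hdvd : ∀ k ∈ Finset.range (p-1), P^(s+2) ∣ x ^ (k+2) * (p.choose (k+2) : ℤ) := by
    intro k hk
    rw [Finset.mem_range] at hk
    rcases eq_or_lt_of_le (Nat.succ_le_of_lt (by omega : k + 1 < p)) with heq | hlt
    · have hxpow : x ^ (k+2) = P^(s*(k+2)) * u^(k+2) := by rw [hx, mul_pow, ← pow_mul]
      refine Dvd.dvd.mul_right ?_ _
      rw [hxpow]
      refine Dvd.dvd.mul_right ?_ _
      refine pow_dvd_pow P ?_
      have h32 : 3 ≤ k + 2 := by omega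
      nlinarith
    · have h1 : P ∣ (p.choose (k+2) : ℤ) :=
        Int.natCast_dvd_natCast.2 (hp.dvd_choose_self (by omega) hlt)
      have h2 : P^(s+1) ∣ x ^ (k+2) := by
        rw [hx, mul_pow, ← pow_mul]
        exact Dvd.dvd.mul_right (pow_dvd_pow P (by nlinarith)) _
      have := mul_dvd_mul h2 h1
      rwa [← pow_succ] at this
  obtain ⟨m, hm⟩ := Finset.dvd_sum hdvd
  refine ⟨m, ?_⟩
  have h3 : p + 1 = (p - 1) + 1 + 1 := by omega
  have hexp : ∑ k ∈ Finset.range (p+1), x ^ k * (p.choose k : ℤ)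
      = 1 + P * x + ∑ k ∈ Finset.range (p-1), x ^ (k+2) * (p.choose (k+2) : ℤ) := by
    rw [h3, Finset.sum_range_succ', Finset.sum_range_succ']
    simp [Nat.choose_one_right]
    ring
  rw [hsum, hexp, hm, hx]
  ring

private lemma formula_odd {p : ℕ} (hp : p.Prime) (hodd : Odd p) :
    ∀ t : ℕ, ∃ u : ℤ, ¬ (p:ℤ) ∣ u ∧ (1 + (p:ℤ))^(p^t) = 1 + (p:ℤ)^(t+1) * u := by
  intro t
  induction t with
  | zero =>
    refine ⟨1, fun h => hp.one_lt.ne'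
      (Nat.dvd_one.mp (Int.natCast_dvd_natCast.mp (by simpa using h))), by simp⟩
  | succ t ih =>
    obtain ⟨u, hu, hf⟩ := ih
    obtain ⟨m, hm⟩ := step_odd hp hodd (Nat.succ_le_succ (Nat.zero_le t)) u
    refine ⟨u + p * m, fun h => hu ?_, ?_⟩
    · exact (dvd_add_left (Dvd.intro m rfl)).mp h
    · rw [pow_succ, pow_mul, hf, hm]

private lemma formula_two : ∀ t : ℕ, 1 ≤ t →
    ∃ u : ℤ, ¬ (2:ℤ) ∣ u ∧ (3:ℤ)^(2^t) = 1 + 2^(t+2) * u := by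
  intro t
  induction t with
  | zero => omega
  | succ t ih =>
    intro _
    rcases Nat.eq_zero_or_pos t with rfl | ht
    · exact ⟨1, by decide, by norm_num⟩
    · obtain ⟨u, hu, hf⟩ := ih ht
      refine ⟨u + 2^(t+1) * u^2, fun h => hu ?_, ?_⟩
      · exact (dvd_add_left (Dvd.dvd.mul_right (dvd_pow_self (2:ℤ) (Nat.succ_ne_zero t)) (u^2))).mp h
      · rw [pow_succ, pow_mul, hf]
        ring

private lemma zmod_pow_eq_one_iff (a : ℤ) (N n : ℕ) :
    ((a : ZMod N))^n = 1 ↔ (N:ℤ) ∣ a^n - 1 := by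
  rw [← sub_eq_zero]
  push_cast [← ZMod.intCast_zmod_eq_zero_iff_dvd]
  norm_cast

private lemma order_bound_odd {p : ℕ} (hp : p.Prime) (hodd : Odd p) {k : ℕ} (hk : 1 ≤ k) {e : ℕ}
    (he : e ≠ 0) (hexp : Monoid.exponent (ZMod (p^k))ˣ ∣ e) : p^(k-1) ∣ e ∧ (p-1) ∣ e := by
  haveI : Fact p.Prime := ⟨hp⟩
  haveI : NeZero (p^k) := ⟨pow_ne_zero _ hp.pos.ne'⟩
  constructor
  · have hcop : Nat.Coprime (1+p) (p^k) :=
      Nat.Coprime.pow_right k (by simpa [Nat.add_comm] using Nat.coprime_succ_self p)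
    set a : (ZMod (p^k))ˣ := ZMod.unitOfCoprime _ hcop with ha
    have haval : ((a : ZMod (p^k))) = (((1 + (p:ℤ)) : ℤ) : ZMod (p^k)) := by
      rw [ha, ZMod.coe_unitOfCoprime]
      push_cast
      ring
    have hord_e : orderOf a ∣ e := (Monoid.order_dvd_exponent a).trans hexp
    have hpow : a ^ (p^(k-1)) = 1 := by
      rw [Units.ext_iff, Units.val_pow_eq_pow_val, haval, Units.val_one, zmod_pow_eq_one_iff]
      obtain ⟨u, -, hf⟩ := formula_odd hp hodd (k-1)
      have hkk : k - 1 + 1 = k := by omega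
      rw [hf, hkk, add_sub_cancel_left]
      push_cast
      exact Dvd.intro u rfl
    have hord_pow : orderOf a ∣ p^(k-1) := orderOf_dvd_of_pow_eq_one hpow
    obtain ⟨t, ht, hteq⟩ := (Nat.dvd_prime_pow hp).mp hord_pow
    have htk : t = k - 1 := by
      by_contra hne
      have htlt : t + 1 ≤ k - 1 := by omega
      have h1 : a ^ (p^t) = 1 := by rw [← hteq]; exact pow_orderOf_eq_one a
      rw [Units.ext_iff, Units.val_pow_eq_pow_val, haval, Units.val_one,
        zmod_pow_eq_one_iff] at h1
      obtain ⟨u, hu, hf⟩ := formula_odd hp hodd t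
      rw [hf, add_sub_cancel_left] at h1
      push_cast at h1
      have h3 : ((p:ℤ))^k ∣ ((p:ℤ))^(t+1) :=
        (Nat.prime_iff_prime_int.mp hp).pow_dvd_of_dvd_mul_right k hu h1
      have h4 : p^k ∣ p^(t+1) := by exact_mod_cast h3
      have := (Nat.pow_dvd_pow_iff_le_right hp.one_lt).mp h4
      omega
    exact htk ▸ hteq ▸ hord_e
  · have hsurj := ZMod.unitsMap_surjective (n := p) (dvd_pow_self p (by omega)) (m := p^k)
    have h := (MonoidHom.exponent_dvd hsurj).trans hexp
    have hc := IsCyclic.exponent_eq_card (α := (ZMod p)ˣ)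
    rwa [hc, Nat.card_eq_fintype_card, ZMod.card_units_eq_totient, Nat.totient_prime hp] at h

private lemma order_bound_two {k : ℕ} {e : ℕ} (he : e ≠ 0)
    (hexp : Monoid.exponent (ZMod (2^k))ˣ ∣ e) : 2^k ≤ 4 * e := by
  rcases le_or_gt k 2 with hk | hk
  · calc 2^k ≤ 2^2 := Nat.pow_le_pow_right (by norm_num) hk
    _ ≤ 4 * e := by omega
  haveI : NeZero (2^k) := ⟨pow_ne_zero _ two_ne_zero⟩
  have hcop : Nat.Coprime 3 (2^k) := Nat.Coprime.pow_right k (by decide)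
  set a : (ZMod (2^k))ˣ := ZMod.unitOfCoprime _ hcop with ha
  have haval : ((a : ZMod (2^k))) = (((3:ℤ)) : ZMod (2^k)) := by
    rw [ha, ZMod.coe_unitOfCoprime]; push_cast; ring
  have hord_e : orderOf a ∣ e := (Monoid.order_dvd_exponent a).trans hexp
  have hpow : a ^ (2^(k-2)) = 1 := by
    rw [Units.ext_iff, Units.val_pow_eq_pow_val, haval, Units.val_one, zmod_pow_eq_one_iff]
    obtain ⟨u, -, hf⟩ := formula_two (k-2) (by omega)
    have hkk : k - 2 + 2 = k := by omega
    rw [hf, hkk, add_sub_cancel_left]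
    push_cast
    exact Dvd.intro u rfl
  have hord_pow : orderOf a ∣ 2^(k-2) := orderOf_dvd_of_pow_eq_one hpow
  obtain ⟨t, ht, hteq⟩ := (Nat.dvd_prime_pow Nat.prime_two).mp hord_pow
  have htk : t = k - 2 := by
    by_contra hne
    have htlt : t + 2 ≤ k - 1 := by omega
    have h1 : a ^ (2^t) = 1 := by rw [← hteq]; exact pow_orderOf_eq_one a
    rw [Units.ext_iff, Units.val_pow_eq_pow_val, haval, Units.val_one,
      zmod_pow_eq_one_iff] at h1
    rcases Nat.eq_zero_or_pos t with rfl | htpos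
    · simp at h1
      push_cast at h1
      have h4 : (2:ℕ)^k ∣ 2^1 := by exact_mod_cast h1
      have := (Nat.pow_dvd_pow_iff_le_right (by norm_num : (1:ℕ) < 2)).mp h4
      omega
    · obtain ⟨u, hu, hf⟩ := formula_two t htpos
      rw [hf, add_sub_cancel_left] at h1
      push_cast at h1
      have h3 : ((2:ℤ))^k ∣ ((2:ℤ))^(t+2) := Int.prime_two.pow_dvd_of_dvd_mul_right k hu h1
      have h4 : (2:ℕ)^k ∣ 2^(t+2) := by exact_mod_cast h3
      have := (Nat.pow_dvd_pow_iff_le_right (by norm_num : (1:ℕ) < 2)).mp h4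
      omega
  have h5 : 2^(k-2) ∣ e := htk ▸ hteq ▸ hord_e
  have h6 : 2^(k-2) ≤ e := Nat.le_of_dvd (by omega) h5
  have : 2^k = 2^(k-2) * 4 := by
    rw [show k = (k-2)+2 by omega, pow_add]; norm_num
  omega

private lemma dvd_factorial_bound {n e : ℕ} (hn : n ≠ 0) (he : e ≠ 0)
    (hexp : Monoid.exponent (ZMod n)ˣ ∣ e) : n ∣ Nat.factorial (4 * e * (e+1)) := by
  haveI : NeZero n := ⟨hn⟩
  set B := 4 * e * (e+1) with hB
  rw [← Nat.factorization_le_iff_dvd hn (Nat.factorial_ne_zero B)]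
  intro p
  by_cases hp : p.Prime
  swap
  · simp [Nat.factorization_eq_zero_of_not_prime _ hp]
  set k := n.factorization p with hk
  rcases Nat.eq_zero_or_pos k with hk0 | hkpos
  · simp [← hk, hk0]
  have hdvd : p ^ k ∣ n := Nat.ordProj_dvd n p
  have hexp' : Monoid.exponent (ZMod (p^k))ˣ ∣ e :=
    (MonoidHom.exponent_dvd (ZMod.unitsMap_surjective hdvd)).trans hexp
  have hbound : p ^ k ≤ B := by
    rcases hp.eq_two_or_odd' with rfl | hodd
    · have := order_bound_two he hexp'
      calc (2:ℕ)^k ≤ 4 * e := this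
      _ ≤ B := by rw [hB]; nlinarith
    · obtain ⟨h1, h2⟩ := order_bound_odd hp hodd hkpos he hexp'
      have e1 : p ^ (k-1) ≤ e := Nat.le_of_dvd (by omega) h1
      have e2 : p - 1 ≤ e := Nat.le_of_dvd (by omega) h2
      have hp2 : 2 ≤ p := hp.two_le
      have hpk : p ^ k = p ^ (k-1) * p := by rw [← pow_succ, Nat.sub_add_cancel hkpos]
      have e3 : p ≤ e + 1 := by omega
      calc p ^ k = p ^ (k-1) * p := hpk
      _ ≤ e * (e+1) := Nat.mul_le_mul e1 e3
      _ ≤ B := by rw [hB]; nlinarith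
  have hdvdfact : p ^ k ∣ Nat.factorial B := Nat.dvd_factorial (pow_pos hp.pos k) hbound
  exact (Nat.Prime.pow_dvd_iff_le_factorization hp (Nat.factorial_ne_zero B)).mp hdvdfact

/-! ### The field `ℚ(d^∞)` and the Galois-theoretic results -/

/-- `ℚ(d^∞)`: the compositum inside an algebraic closure of `ℚ` of all degree-`d`
extensions of `ℚ`. -/
noncomputable def QDInfty (d : ℕ) : IntermediateField ℚ (AlgebraicClosure ℚ) :=
  IntermediateField.adjoin ℚ {β : AlgebraicClosure ℚ | (minpoly ℚ β).natDegree = d}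

private noncomputable def permMulEquiv {α β : Type*} (e : α ≃ β) :
    Equiv.Perm α ≃* Equiv.Perm β :=
  { Equiv.permCongr e with
    map_mul' := fun p q => by
      ext x
      simp [Equiv.permCongr_apply, Equiv.Perm.mul_apply] }

private lemma aut_pow_root_fix (d : ℕ) (hd : 2 ≤ d)
    (τ : AlgebraicClosure ℚ ≃ₐ[ℚ] AlgebraicClosure ℚ)
    (β : AlgebraicClosure ℚ) (hβ : (minpoly ℚ β).natDegree = d) :
    (τ ^ Monoid.exponent (Equiv.Perm (Fin d))) β = β := by
  set e := Monoid.exponent (Equiv.Perm (Fin d)) with he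
  set p := minpoly ℚ β with hpdef
  have hβint : IsIntegral ℚ β := by
    haveI : Algebra.IsIntegral ℚ (AlgebraicClosure ℚ) := (AlgebraicClosure.isAlgebraic ℚ).isIntegral
    exact Algebra.IsIntegral.isIntegral β
  have hp0 : p ≠ 0 := minpoly.ne_zero hβint
  have hsep : p.Separable := (minpoly.irreducible hβint).separable
  have hsplits : (p.map (algebraMap ℚ (AlgebraicClosure ℚ))).Splits := IsAlgClosed.splits _
  set S := p.rootSet (AlgebraicClosure ℚ) with hS
  have hcard : Fintype.card S = d := (card_rootSet_eq_natDegree hsep hsplits).trans hβ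
  have hmem : ∀ (σ : AlgebraicClosure ℚ ≃ₐ[ℚ] AlgebraicClosure ℚ) (y : AlgebraicClosure ℚ),
      y ∈ S → σ y ∈ S := by
    intro σ y hy
    rw [hS, mem_rootSet] at hy ⊢
    exact ⟨hp0, by
      rw [show σ y = σ.toAlgHom y from rfl, Polynomial.aeval_algHom_apply, hy.2, map_zero]⟩
  set π : Equiv.Perm S :=
    { toFun := fun y => ⟨τ y, hmem τ y y.2⟩
      invFun := fun y => ⟨τ.symm y, hmem τ.symm y y.2⟩
      left_inv := fun y => Subtype.ext (τ.symm_apply_apply y)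
      right_inv := fun y => Subtype.ext (τ.apply_symm_apply y) } with hπ
  have key : ∀ (m : ℕ) (y : S), ((π ^ m) y : AlgebraicClosure ℚ) = (τ ^ m) y := by
    intro m
    induction m with
    | zero => intro y; simp
    | succ m ih =>
      intro y
      rw [pow_succ, pow_succ, Equiv.Perm.mul_apply, AlgEquiv.mul_apply]
      exact ih (π y)
  have hexpS : Monoid.exponent (Equiv.Perm S) = e := by
    rw [he]
    exact Monoid.exponent_eq_of_mulEquiv (permMulEquiv (Fintype.equivFinOfCardEq hcard))
  have hπe : π ^ e = 1 := by rw [← hexpS]; exact Monoid.pow_exponent_eq_one π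
  have hβS : β ∈ S := by rw [hS, mem_rootSet]; exact ⟨hp0, minpoly.aeval ℚ β⟩
  have := key e ⟨β, hβS⟩
  rw [hπe] at this
  simpa using this.symm

private lemma tau_pow_fixes (d : ℕ) (hd : 2 ≤ d)
    (τ : AlgebraicClosure ℚ ≃ₐ[ℚ] AlgebraicClosure ℚ)
    {x : AlgebraicClosure ℚ} (hx : x ∈ QDInfty d) :
    (τ ^ Monoid.exponent (Equiv.Perm (Fin d))) x = x := by
  set ρ := τ ^ Monoid.exponent (Equiv.Perm (Fin d)) with hρ
  unfold QDInfty at hx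
  induction hx using IntermediateField.adjoin_induction with
  | mem y hy => exact aut_pow_root_fix d hd τ y hy
  | algebraMap y => exact ρ.commutes y
  | add a b _ _ ha hb => rw [map_add, ha, hb]
  | inv a _ ha => rw [map_inv₀, ha]
  | mul a b _ _ ha hb => rw [map_mul, ha, hb]

private lemma part1 (d : ℕ) (hd : 2 ≤ d) (K : IntermediateField ℚ (AlgebraicClosure ℚ))
    (hK : K ≤ QDInfty d) (hfd : FiniteDimensional ℚ K) (hgal : IsGalois ℚ K) :
    Monoid.exponent (K ≃ₐ[ℚ] K) ∣ Monoid.exponent (Equiv.Perm (Fin d)) := by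
  set e := Monoid.exponent (Equiv.Perm (Fin d)) with he
  refine Monoid.exponent_dvd_of_forall_pow_eq_one fun σ => ?_
  haveI : IsAlgClosure ℚ (AlgebraicClosure ℚ) := AlgebraicClosure.instIsAlgClosure ℚ
  obtain ⟨τ, hτ⟩ := AlgEquiv.restrictNormalHom_surjective (K₁ := K) (E := AlgebraicClosure ℚ) σ
  rw [← hτ, ← map_pow]
  ext x
  have hfix : (τ ^ e) (algebraMap K (AlgebraicClosure ℚ) x)
      = algebraMap K (AlgebraicClosure ℚ) x := by
    have hxQ : (algebraMap K (AlgebraicClosure ℚ) x) ∈ QDInfty d := hK x.2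
    exact tau_pow_fixes d hd τ hxQ
  have hcomm := AlgEquiv.restrictNormal_commutes (τ ^ e) K x
  have : algebraMap K (AlgebraicClosure ℚ) ((AlgEquiv.restrictNormalHom K (τ ^ e)) x)
      = algebraMap K (AlgebraicClosure ℚ) x := by
    rw [show (AlgEquiv.restrictNormalHom K (τ ^ e)) x = ((τ ^ e).restrictNormal K) x from rfl,
      hcomm, hfix]
  simpa using (algebraMap K (AlgebraicClosure ℚ)).injective this

open IntermediateField in
private lemma cyclo_exponent_dvd (d : ℕ) (hd : 2 ≤ d) {x : AlgebraicClosure ℚ}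
    (hxQ : x ∈ QDInfty d) {n : ℕ} (hn : 0 < n) (hprim : IsPrimitiveRoot x n) :
    Monoid.exponent (ZMod n)ˣ ∣ Monoid.exponent (Equiv.Perm (Fin d)) := by
  set n' : ℕ+ := ⟨n, hn⟩ with hn'
  have hxint : IsIntegral ℚ x := by
    haveI : Algebra.IsIntegral ℚ (AlgebraicClosure ℚ) := (AlgebraicClosure.isAlgebraic ℚ).isIntegral
    exact Algebra.IsIntegral.isIntegral x
  set K : IntermediateField ℚ (AlgebraicClosure ℚ) := ℚ⟮x⟯ with hKdef
  have hK : K ≤ QDInfty d := by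
    rw [hKdef]
    exact IntermediateField.adjoin_le_iff.2 (Set.singleton_subset_iff.2 hxQ)
  have hprim' : IsPrimitiveRoot x (n' : ℕ) := hprim
  have H := IntermediateField.adjoin_simple_toSubalgebra_of_isAlgebraic hxint.isAlgebraic
  haveI hcyc : IsCyclotomicExtension {(n' : ℕ)} ℚ K := by
    refine IsCyclotomicExtension.equiv _ _ _ (h := ?_) (.refl : K.toSubalgebra ≃ₐ[ℚ] _)
    rw [hKdef, H]
    exact hprim'.adjoin_isCyclotomicExtension ℚ
  haveI hfd : FiniteDimensional ℚ K := IntermediateField.adjoin.finiteDimensional hxint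
  haveI hgal : IsGalois ℚ K := IsCyclotomicExtension.isGalois (S := {(n' : ℕ)}) ℚ K
  have hirr : Irreducible (cyclotomic (n' : ℕ) ℚ) := cyclotomic.irreducible_rat n'.pos
  have φ := IsCyclotomicExtension.autEquivPow K hirr
  have heq : Monoid.exponent (ZMod n)ˣ = Monoid.exponent (K ≃ₐ[ℚ] K) :=
    (Monoid.exponent_eq_of_mulEquiv φ).symm
  rw [heq]
  exact part1 d hd K hK hfd hgal

theorem exponent_bound_and_finitely_many_roots_of_unity (d : ℕ) (hd : 2 ≤ d) :
    (∀ K : IntermediateField ℚ (AlgebraicClosure ℚ), K ≤ QDInfty d →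
      FiniteDimensional ℚ K → IsGalois ℚ K →
      Monoid.exponent (K ≃ₐ[ℚ] K) ∣ Monoid.exponent (Equiv.Perm (Fin d))) ∧
    {x : AlgebraicClosure ℚ | x ∈ QDInfty d ∧ ∃ n : ℕ, 0 < n ∧ x ^ n = 1}.Finite := by
  constructor
  · exact fun K hK hfd hgal => part1 d hd K hK hfd hgal
  · set e := Monoid.exponent (Equiv.Perm (Fin d)) with he
    have hepos : e ≠ 0 := Monoid.exponent_ne_zero_of_finite
    set N := Nat.factorial (4 * e * (e+1)) with hN
    have hsub : {x : AlgebraicClosure ℚ | x ∈ QDInfty d ∧ ∃ n : ℕ, 0 < n ∧ x ^ n = 1}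
        ⊆ {x : AlgebraicClosure ℚ | ((X : (AlgebraicClosure ℚ)[X])^N - 1).IsRoot x} := by
      rintro x ⟨hxQ, m, hm, hxm⟩
      have hfin : IsOfFinOrder x := isOfFinOrder_iff_pow_eq_one.2 ⟨m, hm, hxm⟩
      have hn : 0 < orderOf x := hfin.orderOf_pos
      have hprim : IsPrimitiveRoot x (orderOf x) := IsPrimitiveRoot.orderOf x
      have hdvd := cyclo_exponent_dvd d hd hxQ hn hprim
      have hNdvd : orderOf x ∣ N := dvd_factorial_bound hn.ne' hepos hdvd
      have hxN : x ^ N = 1 := orderOf_dvd_iff_pow_eq_one.1 hNdvd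
      simp [Set.mem_setOf_eq, Polynomial.IsRoot, hxN]
    refine Set.Finite.subset (Polynomial.finite_setOf_isRoot ?_) hsub
    simpa using Polynomial.X_pow_sub_C_ne_zero
      (Nat.factorial_pos (4 * e * (e+1))) (1 : AlgebraicClosure ℚ)
end
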